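/- Suppose E(t) = 0 for the Lorenz piezoelectric energy, so that v_t = v_x = θ−η_x = θ_t+φ_x = η_t+φ = 0 on (0,L)×(0,∞), with v(0,t) = 0, θ(0,t) = θ(L,t) = 0, and initial data φ(·,0) = φ_t(·,0) = 0. Then v ≡ 0; φ satisfies φ_tt − (μ/ε₃)φ_xx + (μ/(ξε₃))φ = 0 with Neumann boundary conditions and zero initial data, hence φ ≡ 0; then θ_t = 0 and ξθ_xx − θ = 0 with θ(0)=θ(L)=0 gives θ ≡ 0; and the Lorenz gauge −ξθ_x + η = (ξε₃/μ)φ_t then gives η ≡ 0. -/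

import Mathlib

open Set MeasureTheory Function

set_option maxHeartbeats 1000000

/-- Partial derivative in time (second variable). -/
noncomputable def pt (f : ℝ → ℝ → ℝ) (x t : ℝ) : ℝ := deriv (fun s => f x s) t

/-- Partial derivative in space (first variable). -/
noncomputable def px (f : ℝ → ℝ → ℝ) (x t : ℝ) : ℝ := deriv (fun y => f y t) x

noncomputable def D1 (F : ℝ × ℝ → ℝ) (p : ℝ × ℝ) : ℝ := fderiv ℝ F p (1, 0)
noncomputable def D2 (F : ℝ × ℝ → ℝ) (p : ℝ × ℝ) : ℝ := fderiv ℝ F p (0, 1)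

lemma hasDerivAt_sliceX {g : ℝ × ℝ → ℝ} {x t : ℝ} (hg : DifferentiableAt ℝ g (x, t)) :
    HasDerivAt (fun y => g (y, t)) (D1 g (x, t)) x := by
  have h1 : HasDerivAt (fun y : ℝ => ((y, t) : ℝ × ℝ)) (1, 0) x :=
    (hasDerivAt_id x).prodMk (hasDerivAt_const x t)
  exact hg.hasFDerivAt.comp_hasDerivAt x h1

lemma hasDerivAt_sliceT {g : ℝ × ℝ → ℝ} {x t : ℝ} (hg : DifferentiableAt ℝ g (x, t)) :
    HasDerivAt (fun s => g (x, s)) (D2 g (x, t)) t := by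
  have h1 : HasDerivAt (fun s : ℝ => ((x, s) : ℝ × ℝ)) (0, 1) t :=
    (hasDerivAt_const t x).prodMk (hasDerivAt_id t)
  exact hg.hasFDerivAt.comp_hasDerivAt t h1

lemma contDiff_D1 {F : ℝ × ℝ → ℝ} (hF : ContDiff ℝ 2 F) : ContDiff ℝ 1 (D1 F) := by
  unfold D1; exact (hF.fderiv_right (by norm_num)).clm_apply contDiff_const

lemma contDiff_D2 {F : ℝ × ℝ → ℝ} (hF : ContDiff ℝ 2 F) : ContDiff ℝ 1 (D2 F) := by
  unfold D2; exact (hF.fderiv_right (by norm_num)).clm_apply contDiff_const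

lemma continuous_D1 {F : ℝ × ℝ → ℝ} (hF : ContDiff ℝ 1 F) : Continuous (D1 F) := by
  unfold D1; exact (hF.continuous_fderiv one_ne_zero).clm_apply continuous_const

lemma continuous_D2 {F : ℝ × ℝ → ℝ} (hF : ContDiff ℝ 1 F) : Continuous (D2 F) := by
  unfold D2; exact (hF.continuous_fderiv one_ne_zero).clm_apply continuous_const

lemma clairautD {F : ℝ × ℝ → ℝ} (hF : ContDiff ℝ 2 F) (p : ℝ × ℝ) :
    D2 (D1 F) p = D1 (D2 F) p := by
  have hd : ContDiff ℝ 1 (fderiv ℝ F) := hF.fderiv_right (by norm_num)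
  have hdp : DifferentiableAt ℝ (fderiv ℝ F) p := (hd.differentiable one_ne_zero) p
  have e1 : D2 (D1 F) p = fderiv ℝ (fderiv ℝ F) p (0, 1) (1, 0) := by
    unfold D2 D1
    rw [fderiv_clm_apply hdp (differentiableAt_const _)]
    simp
  have e2 : D1 (D2 F) p = fderiv ℝ (fderiv ℝ F) p (1, 0) (0, 1) := by
    unfold D1 D2
    rw [fderiv_clm_apply hdp (differentiableAt_const _)]
    simp
  rw [e1, e2]
  exact second_derivative_symmetric (f := F) (f' := fderiv ℝ F)
    (f'' := fderiv ℝ (fderiv ℝ F) p) (x := p)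
    (fun y => ((hF.differentiable (by norm_num)) y).hasFDerivAt) hdp.hasFDerivAt _ _

-- bridges between curried partial derivatives and D1/D2
lemma px_eq_D1 {φ : ℝ → ℝ → ℝ} (hφ : Differentiable ℝ (uncurry φ)) (x t : ℝ) :
    px φ x t = D1 (uncurry φ) (x, t) :=
  (hasDerivAt_sliceX (hφ (x, t))).deriv

lemma pt_eq_D2 {φ : ℝ → ℝ → ℝ} (hφ : Differentiable ℝ (uncurry φ)) (x t : ℝ) :
    pt φ x t = D2 (uncurry φ) (x, t) :=
  (hasDerivAt_sliceT (hφ (x, t))).deriv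

lemma pxx_eq {φ : ℝ → ℝ → ℝ} (hφ : ContDiff ℝ 2 (uncurry φ)) (x t : ℝ) :
    px (px φ) x t = D1 (D1 (uncurry φ)) (x, t) := by
  have h : (fun y => px φ y t) = fun y => D1 (uncurry φ) (y, t) :=
    funext fun y => px_eq_D1 (hφ.differentiable (by norm_num)) y t
  show deriv (fun y => px φ y t) x = _
  rw [h]
  exact (hasDerivAt_sliceX (((contDiff_D1 hφ).differentiable one_ne_zero) (x, t))).deriv

lemma ptt_eq {φ : ℝ → ℝ → ℝ} (hφ : ContDiff ℝ 2 (uncurry φ)) (x t : ℝ) :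
    pt (pt φ) x t = D2 (D2 (uncurry φ)) (x, t) := by
  have h : (fun s => pt φ x s) = fun s => D2 (uncurry φ) (x, s) :=
    funext fun s => pt_eq_D2 (hφ.differentiable (by norm_num)) x s
  show deriv (fun s => pt φ x s) t = _
  rw [h]
  exact (hasDerivAt_sliceT (((contDiff_D2 hφ).differentiable one_ne_zero) (x, t))).deriv

-- energy densities
noncomputable def En (c k : ℝ) (F : ℝ × ℝ → ℝ) (p : ℝ × ℝ) : ℝ :=
  D2 F p ^ 2 + c * D1 F p ^ 2 + k * F p ^ 2

noncomputable def dEn (c k : ℝ) (F : ℝ × ℝ → ℝ) (p : ℝ × ℝ) : ℝ :=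
  2 * D2 F p * D2 (D2 F) p + c * (2 * D1 F p * D2 (D1 F) p) + k * (2 * F p * D2 F p)

noncomputable def Wn (F : ℝ × ℝ → ℝ) (p : ℝ × ℝ) : ℝ := D2 F p * D1 F p

noncomputable def dWn (F : ℝ × ℝ → ℝ) (p : ℝ × ℝ) : ℝ :=
  D1 (D2 F) p * D1 F p + D2 F p * D1 (D1 F) p

lemma continuous_dEn {c k : ℝ} {F : ℝ × ℝ → ℝ} (hF : ContDiff ℝ 2 F) :
    Continuous (dEn c k F) := by
  unfold dEn
  have h1 := contDiff_D1 hF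
  have h2 := contDiff_D2 hF
  exact (((continuous_const.mul h2.continuous).mul (continuous_D2 h2)).add
    (continuous_const.mul ((continuous_const.mul h1.continuous).mul (continuous_D2 h1)))).add
    (continuous_const.mul ((continuous_const.mul (hF.continuous)).mul h2.continuous))

lemma continuous_dWn {F : ℝ × ℝ → ℝ} (hF : ContDiff ℝ 2 F) :
    Continuous (dWn F) := by
  unfold dWn
  have h1 := contDiff_D1 hF
  have h2 := contDiff_D2 hF
  exact ((continuous_D1 h2).mul h1.continuous).add (h2.continuous.mul (continuous_D1 h1))

lemma continuous_En {c k : ℝ} {F : ℝ × ℝ → ℝ} (hF : ContDiff ℝ 2 F) :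
    Continuous (En c k F) := by
  unfold En
  have h1 := contDiff_D1 hF
  have h2 := contDiff_D2 hF
  exact ((h2.continuous.pow 2).add (continuous_const.mul (h1.continuous.pow 2))).add
    (continuous_const.mul (hF.continuous.pow 2))

lemma hasDerivAt_En {c k : ℝ} {F : ℝ × ℝ → ℝ} (hF : ContDiff ℝ 2 F) (x t : ℝ) :
    HasDerivAt (fun s => En c k F (x, s)) (dEn c k F (x, t)) t := by
  have h0 : HasDerivAt (fun s => F (x, s)) (D2 F (x, t)) t :=
    hasDerivAt_sliceT ((hF.differentiable (by norm_num)) _)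
  have h1 : HasDerivAt (fun s => D1 F (x, s)) (D2 (D1 F) (x, t)) t :=
    hasDerivAt_sliceT (((contDiff_D1 hF).differentiable one_ne_zero) _)
  have h2 : HasDerivAt (fun s => D2 F (x, s)) (D2 (D2 F) (x, t)) t :=
    hasDerivAt_sliceT (((contDiff_D2 hF).differentiable one_ne_zero) _)
  have h := ((h2.pow 2).add ((h1.pow 2).const_mul c)).add ((h0.pow 2).const_mul k)
  have hfun : (fun s => En c k F (x, s))
      = fun s => D2 F (x, s) ^ 2 + c * D1 F (x, s) ^ 2 + k * F (x, s) ^ 2 := rfl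
  rw [hfun]
  refine h.congr_deriv ?_
  unfold dEn; push_cast; ring

lemma hasDerivAt_Wn {F : ℝ × ℝ → ℝ} (hF : ContDiff ℝ 2 F) (x t : ℝ) :
    HasDerivAt (fun y => Wn F (y, t)) (dWn F (x, t)) x := by
  have h1 : HasDerivAt (fun y => D1 F (y, t)) (D1 (D1 F) (x, t)) x :=
    hasDerivAt_sliceX (((contDiff_D1 hF).differentiable one_ne_zero) _)
  have h2 : HasDerivAt (fun y => D2 F (y, t)) (D1 (D2 F) (x, t)) x :=
    hasDerivAt_sliceX (((contDiff_D2 hF).differentiable one_ne_zero) _)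
  exact h2.mul h1

lemma kg_zero {c k L : ℝ} (hc : 0 < c) (hk : 0 < k) (hL : 0 < L)
    (φ : ℝ → ℝ → ℝ) (hφ : ContDiff ℝ 2 (Function.uncurry φ))
    (ic : ∀ x ∈ Icc (0:ℝ) L, φ x 0 = 0 ∧ pt φ x 0 = 0)
    (bc : ∀ t : ℝ, 0 ≤ t → px φ 0 t = 0 ∧ px φ L t = 0)
    (eq : ∀ x ∈ Icc (0:ℝ) L, ∀ t : ℝ, 0 ≤ t →
      pt (pt φ) x t = c * px (px φ) x t - k * φ x t) :
    ∀ x ∈ Icc (0:ℝ) L, ∀ t : ℝ, 0 ≤ t →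
      φ x t = 0 ∧ px φ x t = 0 ∧ pt φ x t = 0 := by
  have hFd : Differentiable ℝ (uncurry φ) := hφ.differentiable (by norm_num)
  -- key pointwise identity
  have hkey : ∀ x ∈ Icc (0:ℝ) L, ∀ t : ℝ, 0 ≤ t →
      dEn c k (uncurry φ) (x, t) = 2 * c * dWn (uncurry φ) (x, t) := by
    intro x hx t ht
    have heq := eq x hx t ht
    rw [ptt_eq hφ, pxx_eq hφ] at heq
    have hφF : φ x t = uncurry φ (x, t) := rfl
    rw [hφF] at heq
    unfold dEn dWn
    rw [heq, clairautD hφ (x, t)]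
    ring
  -- E vanishes at time 0
  have hE0 : ∀ y ∈ Icc (0:ℝ) L, En c k (uncurry φ) (y, 0) = 0 := by
    intro y hy
    have hF0 : uncurry φ (y, 0) = 0 := (ic y hy).1
    have hF20 : D2 (uncurry φ) (y, 0) = 0 := by
      rw [← pt_eq_D2 hFd]; exact (ic y hy).2
    have hF10 : D1 (uncurry φ) (y, 0) = 0 := by
      rw [← px_eq_D1 hFd]
      rcases eq_or_lt_of_le hy.1 with h | h
      · rw [← h]; exact (bc 0 le_rfl).1
      rcases eq_or_lt_of_le hy.2 with h' | h'
      · rw [h']; exact (bc 0 le_rfl).2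
      · have hev : (fun z => φ z 0) =ᶠ[nhds y] fun _ => (0:ℝ) :=
          Filter.eventuallyEq_of_mem (Icc_mem_nhds h h') (fun z hz => (ic z hz).1)
        show deriv (fun z => φ z 0) y = 0
        rw [hev.deriv_eq]; exact deriv_const y 0
    unfold En
    rw [hF0, hF10, hF20]
    ring
  intro x hx T hT
  -- the spatial energy integral at time T vanishes
  have hint0 : ∫ y in (0:ℝ)..L, En c k (uncurry φ) (y, T) = 0 := by
    have c1 : ∫ y in (0:ℝ)..L, En c k (uncurry φ) (y, T)
        = ∫ y in (0:ℝ)..L, ∫ t in (0:ℝ)..T, dEn c k (uncurry φ) (y, t) := by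
      apply intervalIntegral.integral_congr
      intro y hy
      rw [uIcc_of_le hL.le] at hy
      show En c k (uncurry φ) (y, T) = ∫ t in (0:ℝ)..T, dEn c k (uncurry φ) (y, t)
      have hftc : ∫ s in (0:ℝ)..T, dEn c k (uncurry φ) (y, s)
          = En c k (uncurry φ) (y, T) - En c k (uncurry φ) (y, 0) :=
        intervalIntegral.integral_eq_sub_of_hasDerivAt
          (fun s _ => hasDerivAt_En hφ y s)
          (((continuous_dEn hφ).comp
            (continuous_const.prodMk continuous_id)).intervalIntegrable 0 T)
      rw [hftc, hE0 y hy, sub_zero]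
    have c2 : ∫ y in (0:ℝ)..L, ∫ t in (0:ℝ)..T, dEn c k (uncurry φ) (y, t)
        = ∫ y in (0:ℝ)..L, ∫ t in (0:ℝ)..T, 2 * c * dWn (uncurry φ) (y, t) := by
      apply intervalIntegral.integral_congr
      intro y hy
      rw [uIcc_of_le hL.le] at hy
      show (∫ t in (0:ℝ)..T, dEn c k (uncurry φ) (y, t))
        = ∫ t in (0:ℝ)..T, 2 * c * dWn (uncurry φ) (y, t)
      apply intervalIntegral.integral_congr
      intro t ht
      rw [uIcc_of_le hT] at ht
      exact hkey y hy t ht.1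
    have c3 : ∫ y in (0:ℝ)..L, ∫ t in (0:ℝ)..T, 2 * c * dWn (uncurry φ) (y, t)
        = ∫ t in (0:ℝ)..T, ∫ y in (0:ℝ)..L, 2 * c * dWn (uncurry φ) (y, t) := by
      simp only [intervalIntegral.integral_of_le hL.le, intervalIntegral.integral_of_le hT]
      apply MeasureTheory.integral_integral_swap
      have hu : (uncurry fun y t => 2 * c * dWn (uncurry φ) (y, t))
          = fun p => 2 * c * dWn (uncurry φ) p := by
        funext p; rfl
      rw [hu, Measure.prod_restrict]
      show IntegrableOn (fun p => 2 * c * dWn (uncurry φ) p) (Ioc 0 L ×ˢ Ioc 0 T)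
        (volume.prod volume)
      exact (((continuous_const.mul (continuous_dWn hφ)).continuousOn.integrableOn_compact
          (isCompact_Icc.prod isCompact_Icc)).mono_set
        (prod_mono Ioc_subset_Icc_self Ioc_subset_Icc_self))
    have c4 : ∫ t in (0:ℝ)..T, ∫ y in (0:ℝ)..L, 2 * c * dWn (uncurry φ) (y, t) = 0 := by
      have hz : ∫ t in (0:ℝ)..T, ∫ y in (0:ℝ)..L, 2 * c * dWn (uncurry φ) (y, t)
          = ∫ t in (0:ℝ)..T, (0:ℝ) := by
        apply intervalIntegral.integral_congr
        intro t ht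
        rw [uIcc_of_le hT] at ht
        show (∫ y in (0:ℝ)..L, 2 * c * dWn (uncurry φ) (y, t)) = 0
        have hftc : ∫ y in (0:ℝ)..L, dWn (uncurry φ) (y, t)
            = Wn (uncurry φ) (L, t) - Wn (uncurry φ) (0, t) :=
          intervalIntegral.integral_eq_sub_of_hasDerivAt
            (fun y _ => hasDerivAt_Wn hφ y t)
            (((continuous_dWn hφ).comp
              (continuous_id.prodMk continuous_const)).intervalIntegrable 0 L)
        have hW0 : Wn (uncurry φ) (0, t) = 0 := by
          unfold Wn
          have h1 : D1 (uncurry φ) (0, t) = 0 := by rw [← px_eq_D1 hFd]; exact (bc t ht.1).1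
          rw [h1, mul_zero]
        have hWL : Wn (uncurry φ) (L, t) = 0 := by
          unfold Wn
          have h1 : D1 (uncurry φ) (L, t) = 0 := by rw [← px_eq_D1 hFd]; exact (bc t ht.1).2
          rw [h1, mul_zero]
        rw [intervalIntegral.integral_const_mul, hftc, hW0, hWL]
        ring
      rw [hz, intervalIntegral.integral_zero]
    rw [c1, c2, c3, c4]
  -- positivity: En (·, T) vanishes on [0, L]
  have hEnn : ∀ p : ℝ × ℝ, 0 ≤ En c k (uncurry φ) p := by
    intro p; unfold En; positivity
  have hconty : Continuous fun y => En c k (uncurry φ) (y, T) :=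
    (continuous_En hφ).comp (continuous_id.prodMk continuous_const)
  have hzero : ∀ y ∈ Icc (0:ℝ) L, En c k (uncurry φ) (y, T) = 0 := by
    by_contra hcon
    push_neg at hcon
    obtain ⟨y₀, hy₀, hne⟩ := hcon
    have hpos : 0 < En c k (uncurry φ) (y₀, T) := lt_of_le_of_ne (hEnn _) (Ne.symm hne)
    have hev : ∀ᶠ y in nhds y₀, 0 < En c k (uncurry φ) (y, T) :=
      (hconty.continuousAt).eventually (eventually_gt_nhds hpos)
    obtain ⟨ε, hε, hball⟩ := Metric.eventually_nhds_iff.mp hev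
    have huw : max (y₀ - ε) 0 < min (y₀ + ε) L := by
      apply max_lt <;> apply lt_min
      · linarith
      · linarith [hy₀.2]
      · linarith [hy₀.1]
      · exact hL
    have hiipos : 0 < ∫ y in (0:ℝ)..L, En c k (uncurry φ) (y, T) := by
      rw [intervalIntegral.integral_pos_iff_support_of_nonneg_ae
        (Filter.Eventually.of_forall fun y => hEnn (y, T))
        (hconty.intervalIntegrable 0 L)]
      refine ⟨hL, ?_⟩
      have hsub : Ioo (max (y₀ - ε) 0) (min (y₀ + ε) L)
          ⊆ Function.support (fun y => En c k (uncurry φ) (y, T)) ∩ Ioc 0 L := by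
        intro y hy
        constructor
        · apply ne_of_gt
          apply hball
          have h1 : y₀ - ε < y := lt_of_le_of_lt (le_max_left _ _) hy.1
          have h2 : y < y₀ + ε := lt_of_lt_of_le hy.2 (min_le_left _ _)
          rw [Real.dist_eq, abs_lt]; constructor <;> linarith
        · exact ⟨lt_of_le_of_lt (le_max_right _ _) hy.1,
            le_of_lt (lt_of_lt_of_le hy.2 (min_le_right _ _))⟩
      calc (0:ENNReal) < volume (Ioo (max (y₀ - ε) 0) (min (y₀ + ε) L)) := by
            rw [Real.volume_Ioo]; simp [huw]
        _ ≤ _ := measure_mono hsub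
    rw [hint0] at hiipos
    exact lt_irrefl 0 hiipos
  -- extract the three vanishing statements
  have hEx := hzero x hx
  unfold En at hEx
  have hF2z : D2 (uncurry φ) (x, T) = 0 := by
    have h2 : D2 (uncurry φ) (x, T) ^ 2 = 0 := by
      nlinarith [sq_nonneg (D2 (uncurry φ) (x, T)), sq_nonneg (D1 (uncurry φ) (x, T)),
        sq_nonneg (uncurry φ (x, T))]
    exact pow_eq_zero_iff two_ne_zero |>.mp h2
  have hF1z : D1 (uncurry φ) (x, T) = 0 := by
    have h2 : D1 (uncurry φ) (x, T) ^ 2 = 0 := by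
      nlinarith [sq_nonneg (D2 (uncurry φ) (x, T)), sq_nonneg (D1 (uncurry φ) (x, T)),
        sq_nonneg (uncurry φ (x, T))]
    exact pow_eq_zero_iff two_ne_zero |>.mp h2
  have hFz : uncurry φ (x, T) = 0 := by
    have h2 : uncurry φ (x, T) ^ 2 = 0 := by
      nlinarith [sq_nonneg (D2 (uncurry φ) (x, T)), sq_nonneg (D1 (uncurry φ) (x, T)),
        sq_nonneg (uncurry φ (x, T))]
    exact pow_eq_zero_iff two_ne_zero |>.mp h2
  exact ⟨hFz, by rw [px_eq_D1 hFd]; exact hF1z, by rw [pt_eq_D2 hFd]; exact hF2z⟩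

lemma nonpos_aux {L ξ : ℝ} (hL : 0 < L) (hξ : 0 < ξ) (g : ℝ → ℝ)
    (hg : ContDiff ℝ 2 g)
    (heq : ∀ x ∈ Ioo (0:ℝ) L, g x = ξ * deriv (deriv g) x)
    (h0 : g 0 = 0) (h1 : g L = 0) : ∀ x ∈ Icc (0:ℝ) L, g x ≤ 0 := by
  by_contra hcon
  push_neg at hcon
  obtain ⟨x₁, hx₁, hx₁pos⟩ := hcon
  obtain ⟨x₀, hx₀, hmax⟩ := isCompact_Icc.exists_isMaxOn (nonempty_Icc.2 hL.le)
    (hg.continuous.continuousOn)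
  have hgx₀ : 0 < g x₀ := lt_of_lt_of_le hx₁pos (hmax hx₁)
  have hx₀I : x₀ ∈ Ioo (0:ℝ) L := by
    rcases hx₀ with ⟨h0', h1'⟩
    constructor
    · rcases lt_or_eq_of_le h0' with h | h
      · exact h
      · exact absurd (h ▸ h0) (by simpa [← h] using hgx₀.ne')
    · rcases lt_or_eq_of_le h1' with h | h
      · exact h
      · exact absurd (h ▸ h1) (by simpa [h] using hgx₀.ne')
  have hg1 : ContDiff ℝ 1 (deriv g) := by
    have h2 : ContDiff ℝ (1+1) g := by norm_num; exact hg
    exact (contDiff_succ_iff_deriv.mp h2).2.2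
  have hddc : Continuous (deriv (deriv g)) := by
    have h2 : ContDiff ℝ (0+1) (deriv g) := by norm_num; exact hg1
    exact ((contDiff_succ_iff_deriv.mp h2).2.2).continuous
  have hd0 : deriv g x₀ = 0 :=
    (hmax.isLocalMax (Icc_mem_nhds hx₀I.1 hx₀I.2)).deriv_eq_zero
  have hddpos : 0 < deriv (deriv g) x₀ := by
    have := heq x₀ hx₀I
    nlinarith [hgx₀]
  -- find δ > 0 with ball ⊆ positivity region
  have hev : ∀ᶠ y in nhds x₀, 0 < deriv (deriv g) y :=
    (hddc.continuousAt).eventually (eventually_gt_nhds hddpos)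
  obtain ⟨ε, hε, hball⟩ := Metric.eventually_nhds_iff.mp hev
  set δ : ℝ := min (ε / 2) ((L - x₀) / 2) with hδdef
  have hδpos : 0 < δ := lt_min (by linarith) (by simp [hδdef]; linarith [hx₀I.2])
  have hδL : x₀ + δ ≤ L := by
    have : δ ≤ (L - x₀) / 2 := min_le_right _ _
    linarith
  have hsub : Icc x₀ (x₀ + δ) ⊆ {y | 0 < deriv (deriv g) y} := by
    intro y hy
    apply hball
    have h1' : δ ≤ ε / 2 := min_le_left _ _
    have := hy.1; have := hy.2
    simp only [Real.dist_eq]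
    rw [abs_lt]; constructor <;> linarith
  -- deriv g positive on Ioc x₀ (x₀+δ)
  have hmono : StrictMonoOn (deriv g) (Icc x₀ (x₀ + δ)) := by
    apply strictMonoOn_of_deriv_pos (convex_Icc _ _) (hg1.continuous.continuousOn)
    intro y hy
    rw [interior_Icc] at hy
    exact hsub ⟨hy.1.le, hy.2.le⟩
  have hderivpos : ∀ y ∈ Ioc x₀ (x₀ + δ), 0 < deriv g y := by
    intro y hy
    have := hmono (left_mem_Icc.2 (by linarith)) ⟨hy.1.le, hy.2⟩ hy.1
    rw [hd0] at this; exact this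
  have hgmono : StrictMonoOn g (Icc x₀ (x₀ + δ)) := by
    apply strictMonoOn_of_deriv_pos (convex_Icc _ _) (hg.continuous.continuousOn)
    intro y hy
    rw [interior_Icc] at hy
    exact hderivpos y ⟨hy.1, hy.2.le⟩
  have : g x₀ < g (x₀ + δ) :=
    hgmono (left_mem_Icc.2 (by linarith)) (right_mem_Icc.2 (by linarith)) (by linarith)
  have hin : x₀ + δ ∈ Icc (0:ℝ) L := ⟨by linarith [hx₀I.1], hδL⟩
  exact absurd (hmax hin) (by simpa using this)

lemma elliptic_zero {L ξ : ℝ} (hL : 0 < L) (hξ : 0 < ξ) (g : ℝ → ℝ)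
    (hg : ContDiff ℝ 2 g)
    (heq : ∀ x ∈ Ioo (0:ℝ) L, g x = ξ * deriv (deriv g) x)
    (h0 : g 0 = 0) (h1 : g L = 0) : ∀ x ∈ Icc (0:ℝ) L, g x = 0 := by
  intro x hx
  have hup := nonpos_aux hL hξ g hg heq h0 h1 x hx
  have hdown := nonpos_aux hL hξ (fun y => -g y) hg.neg ?_ (by simp [h0]) (by simp [h1]) x hx
  · simpa using le_antisymm hup (by simpa using hdown)
  · intro y hy
    have hneg : deriv (fun y => -g y) = fun y => -deriv g y := by
      funext z; exact deriv.neg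
    rw [hneg]
    have : deriv (fun y => -deriv g y) y = -deriv (deriv g) y := deriv.neg
    rw [this]
    show -g y = ξ * -deriv (deriv g) y
    rw [heq y hy]; ring

/-- vanishing energy forces all state variables of the Lorenz
piezoelectric system to vanish: if v_t = v_x = θ−η_x = θ_t+φ_x = η_t+φ = 0 with the
stated boundary and (zero) initial conditions, then v ≡ φ ≡ θ ≡ η ≡ 0. -/
theorem stmt_16 (ρ α γ μ ξ ε₃ L b : ℝ)
    (hρ : 0 < ρ) (hα : 0 < α) (hγ : 0 < γ) (hμ : 0 < μ) (hξ : 0 < ξ)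
    (hε : 0 < ε₃) (hL : 0 < L) (hb : 0 ≤ b)
    (v φ θ η : ℝ → ℝ → ℝ)
    (hv : ContDiff ℝ 2 (Function.uncurry v)) (hφ : ContDiff ℝ 2 (Function.uncurry φ))
    (hθ : ContDiff ℝ 2 (Function.uncurry θ)) (hη : ContDiff ℝ 2 (Function.uncurry η))
    -- vanishing of all energy densities:
    (hvt : ∀ x ∈ Icc (0:ℝ) L, ∀ t : ℝ, 0 ≤ t → pt v x t = 0)
    (hvx : ∀ x ∈ Icc (0:ℝ) L, ∀ t : ℝ, 0 ≤ t → px v x t = 0)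
    (hB : ∀ x ∈ Icc (0:ℝ) L, ∀ t : ℝ, 0 ≤ t → θ x t - px η x t = 0)
    (hE1 : ∀ x ∈ Icc (0:ℝ) L, ∀ t : ℝ, 0 ≤ t → pt θ x t + px φ x t = 0)
    (hE2 : ∀ x ∈ Icc (0:ℝ) L, ∀ t : ℝ, 0 ≤ t → pt η x t + φ x t = 0)
    -- boundary conditions:
    (bc1 : ∀ t : ℝ, 0 ≤ t → v 0 t = 0)
    (bc2 : ∀ t : ℝ, 0 ≤ t → θ 0 t = 0 ∧ θ L t = 0)
    (bc3 : ∀ t : ℝ, 0 ≤ t → px φ 0 t = 0 ∧ px φ L t = 0)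
    -- zero initial data for φ:
    (ic : ∀ x ∈ Icc (0:ℝ) L, φ x 0 = 0 ∧ pt φ x 0 = 0)
    -- the φ-equation (Klein–Gordon) and θ-equation of the Lorenz system:
    (eqφ : ∀ x ∈ Icc (0:ℝ) L, ∀ t : ℝ, 0 ≤ t →
      pt (pt φ) x t - (μ / ε₃) * px (px φ) x t + (μ / (ξ * ε₃)) * φ x t
        - (γ * μ / (ξ * ε₃ ^ 2)) * px v x t = 0)
    (eqθ : ∀ x ∈ Icc (0:ℝ) L, ∀ t : ℝ, 0 ≤ t →
      pt (pt θ) x t - (μ / ε₃) * px (px θ) x t + (μ / (ξ * ε₃)) * θ x t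
        + b * (pt θ x t + px φ x t) = 0)
    -- Lorenz gauge condition:
    (gauge : ∀ x ∈ Icc (0:ℝ) L, ∀ t : ℝ, 0 ≤ t →
      -ξ * px θ x t + η x t = (ξ * ε₃ / μ) * pt φ x t) :
    ∀ x ∈ Icc (0:ℝ) L, ∀ t : ℝ, 0 ≤ t →
      v x t = 0 ∧ φ x t = 0 ∧ θ x t = 0 ∧ η x t = 0 := by
  have hc : 0 < μ / ε₃ := div_pos hμ hε
  have hk : 0 < μ / (ξ * ε₃) := div_pos hμ (mul_pos hξ hε)
  have hvd : Differentiable ℝ (uncurry v) := hv.differentiable (by norm_num)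
  -- Step 1: v vanishes
  have hv0 : ∀ x ∈ Icc (0:ℝ) L, ∀ t : ℝ, 0 ≤ t → v x t = 0 := by
    intro x hx t ht
    have hftc : ∫ y in (0:ℝ)..x, D1 (uncurry v) (y, t) = v x t - v 0 t :=
      intervalIntegral.integral_eq_sub_of_hasDerivAt
        (fun y _ => hasDerivAt_sliceX (hvd (y, t)))
        (((continuous_D1 (hv.of_le (by norm_num))).comp
          (continuous_id.prodMk continuous_const)).intervalIntegrable 0 x)
    have hzero : ∫ y in (0:ℝ)..x, D1 (uncurry v) (y, t) = ∫ y in (0:ℝ)..x, (0:ℝ) := by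
      apply intervalIntegral.integral_congr
      intro y hy
      rw [uIcc_of_le hx.1] at hy
      have hyL : y ∈ Icc (0:ℝ) L := ⟨hy.1, le_trans hy.2 hx.2⟩
      show D1 (uncurry v) (y, t) = 0
      rw [← px_eq_D1 hvd]
      exact hvx y hyL t ht
    rw [hzero, intervalIntegral.integral_zero] at hftc
    rw [bc1 t ht] at hftc
    linarith
  -- Step 2: φ (and its partials) vanish via Klein-Gordon energy
  have eq' : ∀ x ∈ Icc (0:ℝ) L, ∀ t : ℝ, 0 ≤ t →
      pt (pt φ) x t = (μ / ε₃) * px (px φ) x t - (μ / (ξ * ε₃)) * φ x t := by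
    intro x hx t ht
    have h1 := eqφ x hx t ht
    have h2 := hvx x hx t ht
    rw [h2] at h1
    linarith
  have hφ0 := kg_zero hc hk hL φ hφ ic bc3 eq'
  -- Step 3: θ vanishes via the elliptic maximum principle
  have hθ0 : ∀ x ∈ Icc (0:ℝ) L, ∀ t : ℝ, 0 ≤ t → θ x t = 0 := by
    intro x hx t ht
    have hgC : ContDiff ℝ 2 (fun y => θ y t) :=
      hθ.comp (contDiff_id.prodMk contDiff_const)
    have hη_eq : ∀ y ∈ Icc (0:ℝ) L, η y t = ξ * px θ y t := by
      intro y hy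
      have hg := gauge y hy t ht
      have hptφ : pt φ y t = 0 := (hφ0 y hy t ht).2.2
      rw [hptφ, mul_zero] at hg
      linarith
    have heq : ∀ y ∈ Ioo (0:ℝ) L, (fun y => θ y t) y
        = ξ * deriv (deriv (fun y => θ y t)) y := by
      intro y hy
      have hyL : y ∈ Icc (0:ℝ) L := ⟨hy.1.le, hy.2.le⟩
      have hθy : θ y t = px η y t := by have := hB y hyL t ht; linarith
      have hev : (fun z => η z t) =ᶠ[nhds y] fun z => ξ * px θ z t :=
        Filter.eventuallyEq_of_mem (Icc_mem_nhds hy.1 hy.2) (fun z hz => hη_eq z hz)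
      have hd : px η y t = ξ * px (px θ) y t := by
        show deriv (fun z => η z t) y = _
        rw [hev.deriv_eq]
        have hdiff : DifferentiableAt ℝ (fun z => px θ z t) y := by
          have hfun : (fun z => px θ z t) = fun z => D1 (uncurry θ) (z, t) :=
            funext fun z => px_eq_D1 (hθ.differentiable (by norm_num)) z t
          rw [hfun]
          exact (hasDerivAt_sliceX
            (((contDiff_D1 hθ).differentiable one_ne_zero) (y, t))).differentiableAt
        rw [deriv_const_mul ξ hdiff]
        rfl
      have hpp : px (px θ) y t = deriv (deriv (fun z => θ z t)) y := rfl
      show θ y t = _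
      rw [hθy, hd, hpp]
    have := elliptic_zero hL hξ (fun y => θ y t) hgC heq (bc2 t ht).1 (bc2 t ht).2 x hx
    exact this
  -- Step 4: η vanishes
  have hη0 : ∀ x ∈ Icc (0:ℝ) L, ∀ t : ℝ, 0 ≤ t → η x t = 0 := by
    intro x hx t ht
    have hIoo : ∀ y ∈ Ioo (0:ℝ) L, η y t = 0 := by
      intro y hy
      have hyL : y ∈ Icc (0:ℝ) L := ⟨hy.1.le, hy.2.le⟩
      have hg := gauge y hyL t ht
      have hptφ : pt φ y t = 0 := (hφ0 y hyL t ht).2.2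
      rw [hptφ, mul_zero] at hg
      have hev : (fun z => θ z t) =ᶠ[nhds y] fun _ => (0:ℝ) :=
        Filter.eventuallyEq_of_mem (Icc_mem_nhds hy.1 hy.2)
          (fun z hz => hθ0 z hz t ht)
      have hpxθ : px θ y t = 0 := by
        show deriv (fun z => θ z t) y = 0
        rw [hev.deriv_eq]; exact deriv_const y 0
      rw [hpxθ] at hg
      linarith
    have hcont : Continuous fun y => η y t :=
      hη.continuous.comp (continuous_id.prodMk continuous_const)
    have heqon : EqOn (fun y => η y t) (fun _ => (0:ℝ)) (Ioo (0:ℝ) L) :=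
      fun y hy => hIoo y hy
    have hclos : EqOn (fun y => η y t) (fun _ => (0:ℝ)) (closure (Ioo (0:ℝ) L)) :=
      heqon.closure hcont continuous_const
    rw [closure_Ioo hL.ne] at hclos
    exact hclos hx
  intro x hx t ht
  exact ⟨hv0 x hx t ht, (hφ0 x hx t ht).1, hθ0 x hx t ht, hη0 x hx t ht⟩
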